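/- Suppose that φ(q_i) < M_i − 1 for all sufficiently large i. Then there exists an infinite set A ⊆ E such that A + A + A ⊆ E. -/

import Mathlib

open Filter Set Metric Pointwise

/-- Modified Falconer construction. If `φ(q i) < M i - 1` for all
sufficiently large `i`, then there exists an infinite set `A ⊆ E` with `A + A + A ⊆ E`.
(Indices are shifted so that the paper's `q_1 = 2` corresponds to `q 0 = 2`.) -/
theorem falconer_triple_sumset
    (M : ℕ → ℕ) (hMpos : ∀ i, 0 < M i) (hMmono : Monotone M)
    (hMtop : Tendsto M atTop atTop)
    (q : ℕ → ℕ) (hq0 : q 0 = 2) (hqrec : ∀ i, q (i + 1) = q i ^ M i)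
    (φ : ℝ → ℝ) (hφpos : ∀ t : ℝ, 2 ≤ t → 0 < φ t)
    (hφmono : MonotoneOn φ (Set.Ici (2 : ℝ)))
    (hφtop : Tendsto φ atTop atTop)
    (G : ℕ → Set ℝ)
    (hG : ∀ i, G i = {x : ℝ | ∃ k : ℤ, 0 ≤ k ∧ k ≤ (q i : ℤ) ∧ x = (k : ℝ) / (q i : ℝ)})
    (r : ℕ → ℝ) (hr : ∀ i, r i = (q i : ℝ) ^ (-φ ((q i : ℕ) : ℝ)))
    (Ei : ℕ → Set ℝ)
    (hEi : ∀ i, Ei i = {x ∈ Set.Icc (0 : ℝ) 1 | Metric.infDist x (G i) ≤ r i})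
    (E : Set ℝ) (hE : E = ⋂ i, Ei i)
    (hyp : ∀ᶠ i in atTop, φ ((q i : ℕ) : ℝ) < (M i : ℝ) - 1) :
    ∃ A : Set ℝ, A.Infinite ∧ A ⊆ E ∧ A + A + A ⊆ E := by
  -- basic facts about q
  have hq2 : ∀ i, 2 ≤ q i := by
    intro i
    induction i with
    | zero => simp [hq0]
    | succ n ih =>
      rw [hqrec]
      exact le_trans ih (Nat.le_self_pow (hMpos n).ne' _)
  have hqposn : ∀ i, 0 < q i := fun i => lt_of_lt_of_le two_pos (hq2 i)
  have hqpos : ∀ i, (0:ℝ) < (q i : ℝ) := fun i => by exact_mod_cast hqposn i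
  have hqmono : Monotone q :=
    monotone_nat_of_le_succ (fun n => by rw [hqrec]; exact Nat.le_self_pow (hMpos n).ne' _)
  have hqdvd : ∀ i j, i ≤ j → q i ∣ q j := by
    intro i j h
    induction j, h using Nat.le_induction with
    | base => exact dvd_rfl
    | succ k hk ih =>
      rw [hqrec]
      exact ih.trans (dvd_pow_self _ (hMpos k).ne')
  have hrpos : ∀ i, 0 < r i := by
    intro i; rw [hr]; exact Real.rpow_pos_of_pos (hqpos i) _
  -- growth of q
  obtain ⟨n0, hn0⟩ := eventually_atTop.mp (hMtop.eventually_ge_atTop 2)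
  have hstep : ∀ n, n0 ≤ n → 2 * q n ≤ q (n + 1) := by
    intro n hn
    rw [hqrec]
    calc 2 * q n ≤ q n * q n := Nat.mul_le_mul_right _ (hq2 n)
      _ = q n ^ 2 := (sq (q n)).symm
      _ ≤ q n ^ M n := Nat.pow_le_pow_right (hqposn n) (hn0 n hn)
  have hgrow : ∀ k, 2 ^ (k + 1) ≤ q (n0 + k) := by
    intro k
    induction k with
    | zero => simpa using hq2 n0
    | succ m ih =>
      calc 2 ^ (m + 2) = 2 * 2 ^ (m + 1) := by ring
        _ ≤ 2 * q (n0 + m) := Nat.mul_le_mul_left _ ih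
        _ ≤ q (n0 + m + 1) := hstep _ (Nat.le_add_right _ _)
  have hbig : ∀ C : ℕ, ∃ n, n0 ≤ n ∧ C ≤ q n := by
    intro C
    refine ⟨n0 + C, Nat.le_add_right _ _, ?_⟩
    calc C ≤ 2 ^ C := Nat.le_of_lt (Nat.lt_two_pow_self (n := C))
      _ ≤ 2 ^ (C + 1) := Nat.pow_le_pow_right two_pos (Nat.le_succ _)
      _ ≤ q (n0 + C) := hgrow C
  -- the index J beyond which the key inequality holds
  obtain ⟨J1, hJ1⟩ := eventually_atTop.mp hyp
  set J := max J1 (n0 + 1) with hJdef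
  have hJq3 : ∀ i, J ≤ i → 3 ≤ q i := by
    intro i hi
    have h4 : 4 ≤ q (n0 + 1) := by simpa using hgrow 1
    have := hqmono (le_trans (le_max_right J1 (n0 + 1)) hi)
    omega
  have hkey : ∀ i, J ≤ i → 3 / (q (i + 1) : ℝ) ≤ r i := by
    intro i hi
    have hx2 : (2:ℝ) ≤ (q i : ℝ) := by exact_mod_cast hq2 i
    have hx1 : (1:ℝ) < (q i : ℝ) := by linarith
    have hφi : φ ((q i : ℕ) : ℝ) < (M i : ℝ) - 1 := hJ1 i (le_trans (le_max_left _ _) hi)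
    rw [div_le_iff₀ (hqpos _)]
    have heq : r i * (q (i + 1) : ℝ) = (q i : ℝ) ^ ((M i : ℝ) - φ ((q i : ℕ) : ℝ)) := by
      rw [hr, hqrec]
      push_cast
      rw [← Real.rpow_natCast ((q i : ℝ)) (M i), ← Real.rpow_add (hqpos i)]
      ring_nf
    rw [heq]
    have h3 : (3:ℝ) ≤ (q i : ℝ) := by exact_mod_cast hJq3 i hi
    calc (3:ℝ) ≤ (q i : ℝ) := h3
      _ = (q i : ℝ) ^ (1:ℝ) := (Real.rpow_one _).symm
      _ ≤ (q i : ℝ) ^ ((M i : ℝ) - φ ((q i : ℕ) : ℝ)) := by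
          apply Real.rpow_le_rpow_of_exponent_le (le_of_lt hx1)
          linarith
  -- lower bound c for r j, j < J
  have hcex : ∀ Jv : ℕ, ∃ c : ℝ, 0 < c ∧ ∀ j < Jv, c ≤ r j := by
    intro Jv
    induction Jv with
    | zero => exact ⟨1, one_pos, fun j hj => absurd hj (Nat.not_lt_zero j)⟩
    | succ n ih =>
      obtain ⟨c, hc0, hcle⟩ := ih
      refine ⟨min c (r n), lt_min hc0 (hrpos n), fun j hj => ?_⟩
      rcases Nat.lt_succ_iff_lt_or_eq.mp hj with h | rfl
      · exact le_trans (min_le_left _ _) (hcle j h)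
      · exact min_le_right _ _
  obtain ⟨c, hc0, hcr⟩ := hcex J
  -- choose N
  obtain ⟨N1, hN1n0, hN1q⟩ := hbig (max 3 ⌈3 / c⌉₊)
  set N := max N1 J with hNdef
  have hNn0 : n0 ≤ N := le_trans hN1n0 (le_max_left _ _)
  have hNJ : J ≤ N := le_max_right _ _
  have hqN1N : q N1 ≤ q N := hqmono (le_max_left _ _)
  have hqN3 : 3 ≤ q N := le_trans (le_trans (le_max_left _ _) hN1q) hqN1N
  have hqN3' : (3:ℝ) ≤ (q N : ℝ) := by exact_mod_cast hqN3
  have hqNc : 3 / c ≤ (q N : ℝ) := by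
    have h1 : (⌈3 / c⌉₊ : ℝ) ≤ (q N : ℝ) := by
      exact_mod_cast le_trans (le_trans (le_max_right _ _) hN1q) hqN1N
    exact le_trans (Nat.le_ceil _) h1
  have hNr : ∀ j, j < J → 3 / (q N : ℝ) ≤ r j := by
    intro j hj
    have h3c : (0:ℝ) < 3 / c := by positivity
    have h1 : 3 / (q N : ℝ) ≤ 3 / (3 / c) := by gcongr
    have h2 : (3:ℝ) / (3 / c) = c := by field_simp
    rw [h2] at h1
    exact le_trans h1 (hcr j hj)
  -- core membership criterion
  have hcore : ∀ y : ℝ, 0 ≤ y → y ≤ 1 →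
      (∀ i, ∃ g ∈ G i, |y - g| ≤ 3 * ((q (max (i + 1) N) : ℝ))⁻¹) → y ∈ E := by
    intro y hy0 hy1 h
    rw [hE, Set.mem_iInter]
    intro i
    rw [hEi]
    refine ⟨⟨hy0, hy1⟩, ?_⟩
    obtain ⟨g, hg, hdist⟩ := h i
    have h1 : Metric.infDist y (G i) ≤ dist y g := Metric.infDist_le_dist_of_mem hg
    rw [Real.dist_eq] at h1
    refine le_trans (le_trans h1 hdist) ?_
    by_cases hJi : J ≤ i
    · have hle : q (i + 1) ≤ q (max (i + 1) N) := hqmono (le_max_left _ _)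
      have : ((q (max (i + 1) N) : ℝ))⁻¹ ≤ ((q (i + 1) : ℝ))⁻¹ := by
        apply inv_anti₀ (hqpos _)
        exact_mod_cast hle
      calc 3 * ((q (max (i + 1) N) : ℝ))⁻¹ ≤ 3 * ((q (i + 1) : ℝ))⁻¹ := by linarith
        _ = 3 / (q (i + 1) : ℝ) := by ring
        _ ≤ r i := hkey i hJi
    · have hle : q N ≤ q (max (i + 1) N) := hqmono (le_max_right _ _)
      have : ((q (max (i + 1) N) : ℝ))⁻¹ ≤ ((q N : ℝ))⁻¹ := by
        apply inv_anti₀ (hqpos _)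
        exact_mod_cast hle
      calc 3 * ((q (max (i + 1) N) : ℝ))⁻¹ ≤ 3 * ((q N : ℝ))⁻¹ := by linarith
        _ = 3 / (q N : ℝ) := by ring
        _ ≤ r i := hNr i (by omega)
  -- term lemma
  have hterm : ∀ i m : ℕ, N ≤ m → ∃ k : ℤ, 0 ≤ k ∧
      (if m ≤ i then ((q m : ℝ))⁻¹ else 0) = (k : ℝ) / (q i : ℝ) ∧
      0 ≤ (q m : ℝ)⁻¹ - (if m ≤ i then ((q m : ℝ))⁻¹ else 0) ∧
      (q m : ℝ)⁻¹ - (if m ≤ i then ((q m : ℝ))⁻¹ else 0) ≤ ((q (max (i + 1) N) : ℝ))⁻¹ := by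
    intro i m hm
    by_cases h : m ≤ i
    · refine ⟨((q i / q m : ℕ) : ℤ), Int.ofNat_nonneg _, ?_, ?_, ?_⟩
      · simp only [if_pos h]
        have hd := hqdvd m i h
        have hmul : (q i / q m : ℕ) * q m = q i := Nat.div_mul_cancel hd
        have hcast : ((q i / q m : ℕ) : ℝ) * (q m : ℝ) = (q i : ℝ) := by exact_mod_cast hmul
        have hqm := hqpos m
        have hqi := hqpos i
        rw [Int.cast_natCast]
        field_simp
        rw [← hcast]; ring
      · simp [if_pos h]
      · simp only [if_pos h, sub_self]
        positivity
    · refine ⟨0, le_refl _, ?_, ?_, ?_⟩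
      · simp [if_neg h]
      · simp only [if_neg h, sub_zero]
        positivity
      · simp only [if_neg h, sub_zero]
        apply inv_anti₀ (hqpos _)
        exact_mod_cast hqmono (max_le (by omega) hm)
  have hub : ∀ m, N ≤ m → (q m : ℝ)⁻¹ ≤ 1 / 3 := by
    intro m hm
    have h3 : (3:ℝ) ≤ (q m : ℝ) := le_trans hqN3' (by exact_mod_cast hqmono hm)
    rw [inv_le_comm₀ (hqpos m) (by norm_num)] at *
    · linarith
  have hinvpos : ∀ m : ℕ, (0:ℝ) ≤ (q m : ℝ)⁻¹ := fun m => le_of_lt (inv_pos.mpr (hqpos m))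
  -- single element membership
  have hmem1 : ∀ n, N ≤ n → ((q n : ℝ))⁻¹ ∈ E := by
    intro n hn
    apply hcore _ (hinvpos n) (le_trans (hub n hn) (by norm_num))
    intro i
    obtain ⟨k, hk0, hkeq, hd0, hdle⟩ := hterm i n hn
    refine ⟨(k : ℝ) / (q i : ℝ), ?_, ?_⟩
    · rw [hG]
      refine ⟨k, hk0, ?_, rfl⟩
      have h1 : (k : ℝ) / (q i : ℝ) ≤ 1 := by
        rw [← hkeq]
        split
        · exact le_trans (hub n hn) (by norm_num)
        · norm_num
      rw [div_le_one (hqpos i)] at h1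
      exact_mod_cast h1
    · rw [← hkeq]
      rw [abs_of_nonneg hd0]
      have hp : (0:ℝ) ≤ ((q (max (i + 1) N) : ℝ))⁻¹ := hinvpos _
      linarith
  -- triple sum membership
  have hmem3 : ∀ a b d : ℕ, N ≤ a → N ≤ b → N ≤ d →
      ((q a : ℝ))⁻¹ + ((q b : ℝ))⁻¹ + ((q d : ℝ))⁻¹ ∈ E := by
    intro a b d ha hb hd
    have hua := hub a ha; have hubb := hub b hb; have hud := hub d hd
    apply hcore _ (by positivity) (by linarith)
    intro i
    obtain ⟨ka, ka0, hga, hda0, hda⟩ := hterm i a ha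
    obtain ⟨kb, kb0, hgb, hdb0, hdb⟩ := hterm i b hb
    obtain ⟨kd, kd0, hgd, hdd0, hdd⟩ := hterm i d hd
    refine ⟨((ka + kb + kd : ℤ) : ℝ) / (q i : ℝ), ?_, ?_⟩
    · rw [hG]
      refine ⟨ka + kb + kd, by linarith, ?_, rfl⟩
      have hgeq : ((ka + kb + kd : ℤ) : ℝ) / (q i : ℝ)
          = (if a ≤ i then ((q a : ℝ))⁻¹ else 0) + (if b ≤ i then ((q b : ℝ))⁻¹ else 0)
            + (if d ≤ i then ((q d : ℝ))⁻¹ else 0) := by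
        rw [hga, hgb, hgd]; push_cast; ring
      have hle1 : ((ka + kb + kd : ℤ) : ℝ) / (q i : ℝ) ≤ 1 := by
        rw [hgeq]
        have h1 : (if a ≤ i then ((q a : ℝ))⁻¹ else 0) ≤ (q a : ℝ)⁻¹ := by linarith
        have h2 : (if b ≤ i then ((q b : ℝ))⁻¹ else 0) ≤ (q b : ℝ)⁻¹ := by linarith
        have h3 : (if d ≤ i then ((q d : ℝ))⁻¹ else 0) ≤ (q d : ℝ)⁻¹ := by linarith
        linarith
      rw [div_le_one (hqpos i)] at hle1
      exact_mod_cast hle1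
    · have hgeq : ((ka + kb + kd : ℤ) : ℝ) / (q i : ℝ)
          = (if a ≤ i then ((q a : ℝ))⁻¹ else 0) + (if b ≤ i then ((q b : ℝ))⁻¹ else 0)
            + (if d ≤ i then ((q d : ℝ))⁻¹ else 0) := by
        rw [hga, hgb, hgd]; push_cast; ring
      rw [hgeq]
      rw [abs_of_nonneg (by linarith)]
      linarith
  -- the set A
  refine ⟨(fun n => ((q n : ℝ))⁻¹) '' Set.Ici N, ?_, ?_, ?_⟩
  · have hsm : ∀ m n : ℕ, N ≤ m → m < n → q m < q n := by
      intro m n hm hlt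
      have h1 : q m < q (m + 1) := by
        have := hstep m (le_trans hNn0 hm)
        have := hqposn m
        omega
      exact lt_of_lt_of_le h1 (hqmono hlt)
    have hinj : Set.InjOn (fun n => ((q n : ℝ))⁻¹) (Set.Ici N) := ?_
    · exact (Set.infinite_image_iff hinj).mpr (Set.Ici_infinite N)
    intro m hm n hn heq
    simp only at heq
    have hqeq : q m = q n := by
      have := inv_injective heq
      exact_mod_cast this
    by_contra hne
    rcases Nat.lt_or_ge m n with h | h
    · exact absurd hqeq (Nat.ne_of_lt (hsm m n hm h))
    · have h' : n < m := by omega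
      exact absurd hqeq.symm (Nat.ne_of_lt (hsm n m hn h'))
  · rintro x ⟨n, hn, rfl⟩
    exact hmem1 n hn
  · rintro x hx
    rw [Set.mem_add] at hx
    obtain ⟨y, hy, z, hz, rfl⟩ := hx
    rw [Set.mem_add] at hy
    obtain ⟨u, hu, v, hv, rfl⟩ := hy
    obtain ⟨a, ha, rfl⟩ := hu
    obtain ⟨b, hb, rfl⟩ := hv
    obtain ⟨d, hd, rfl⟩ := hz
    exact hmem3 a b d ha hb hd
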